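/- The canonical embedding of a Banach lattice V into its double dual V** is a lattice homomorphism: J(x ⊔ y) = Jx ⊔ Jy for all x, y in V. -/

import Mathlib

variable {V : Type*} [NormedAddCommGroup V] [Lattice V] [HasSolidNorm V]
  [IsOrderedAddMonoid V] [NormedSpace ℝ V]
  [PosSMulMono ℝ V] [CompleteSpace V]

/-- The canonical order on the double dual: `μ ≤ ν` iff `μ f ≤ ν f` for every
positive continuous functional `f` on `V`. -/
def DoubleDualLE (μ ν : StrongDual ℝ (StrongDual ℝ V)) : Prop :=
  ∀ f : StrongDual ℝ V, (∀ y : V, 0 ≤ y → 0 ≤ f y) → μ f ≤ ν f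

section Aux

private lemma smul_sup_aux {c : ℝ} (hc : 0 < c) (a b : V) :
    c • (a ⊔ b) = c • a ⊔ c • b :=
  (OrderIso.smulRight (β := V) hc).map_sup a b

private lemma posPart_smul_aux {c : ℝ} (hc : 0 < c) (a : V) :
    (c • a)⁺ = c • a⁺ := by
  rw [posPart_def, posPart_def, smul_sup_aux hc, smul_zero]

private lemma pos_mono {f : StrongDual ℝ V}
    (hf : ∀ v : V, 0 ≤ v → 0 ≤ f v) {a b : V} (hab : a ≤ b) : f a ≤ f b := by
  have := hf (b - a) (by simpa using hab)
  simpa [map_sub] using this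

/-- Key construction: given a positive functional `f` and a vector `u`, there is
a functional `g` with `0 ≤ g ≤ f` and `g u = f u⁺`. -/
private lemma exists_pos_component (f : StrongDual ℝ V)
    (hf : ∀ v : V, 0 ≤ v → 0 ≤ f v) (u : V) :
    ∃ g : StrongDual ℝ V, (∀ v : V, 0 ≤ v → 0 ≤ g v) ∧
      (∀ v : V, 0 ≤ v → g v ≤ f v) ∧ g u = f u⁺ := by
  by_cases hu : u = 0
  · refine ⟨0, fun v _ => le_rfl, fun v hv => hf v hv, ?_⟩
    simp [hu]
  -- sublinear functional N v = f (v⁺)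
  set N : V → ℝ := fun v => f v⁺ with hN
  have hN_smul : ∀ c : ℝ, 0 < c → ∀ v : V, N (c • v) = c * N v := by
    intro c hc v
    simp [hN, posPart_smul_aux hc, map_smul]
  have hN_add : ∀ v w : V, N (v + w) ≤ N v + N w := by
    intro v w
    have h1 : (v + w)⁺ ≤ v⁺ + w⁺ := by
      rw [posPart_def, posPart_def, posPart_def]
      refine sup_le (add_le_add le_sup_left le_sup_left) ?_
      simpa using add_le_add (le_sup_right : (0:V) ≤ v ⊔ 0)
        (le_sup_right : (0:V) ≤ w ⊔ 0)
    have := pos_mono hf h1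
    simpa [hN, map_add] using this
  -- partial linear map on span of u
  let p : V →ₗ.[ℝ] ℝ := LinearPMap.mkSpanSingleton u (f u⁺) hu
  have hp_le : ∀ v : p.domain, p v ≤ N v := by
    rintro ⟨v, hv⟩
    have hv' : v ∈ Submodule.span ℝ {u} := hv
    obtain ⟨c, rfl⟩ := Submodule.mem_span_singleton.1 hv'
    have happ : p ⟨c • u, by
        exact Submodule.smul_mem _ c (Submodule.mem_span_singleton_self u)⟩
        = c • (f u⁺) := LinearPMap.mkSpanSingleton'_apply _ _ _ c _
    rw [happ]
    rcases lt_trichotomy c 0 with hc | hc | hc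
    · have h1 : c • f u⁺ ≤ 0 := by
        have := hf u⁺ (posPart_nonneg u)
        exact smul_nonpos_of_nonpos_of_nonneg hc.le this
      have h2 : (0:ℝ) ≤ N (c • u) := hf _ (posPart_nonneg _)
      exact h1.trans h2
    · simp [hc, hN]
    · rw [hN_smul c hc]
      simp [hN, smul_eq_mul]
  obtain ⟨g, hg_eq, hg_le⟩ := exists_extension_of_le_sublinear p N hN_smul hN_add hp_le
  -- continuity of g
  have hbound : ∀ v : V, |g v| ≤ ‖f‖ * ‖v‖ := by
    intro v
    have h1 : g v ≤ ‖f‖ * ‖v‖ := by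
      refine (hg_le v).trans ?_
      calc f v⁺ ≤ ‖f‖ * ‖v⁺‖ := le_trans (le_abs_self _) (f.le_opNorm _)
        _ ≤ ‖f‖ * ‖v‖ := by
            gcongr
            calc ‖v⁺‖ ≤ ‖|v|‖ := by
                  apply norm_le_norm_of_abs_le_abs
                  rw [abs_of_nonneg (posPart_nonneg v), abs_abs]
                  rw [posPart_def]
                  exact sup_le (le_abs_self v) (abs_nonneg v)
              _ = ‖v‖ := norm_abs_eq_norm v
    have h2 : -(‖f‖ * ‖v‖) ≤ g v := by
      have hb : N (-v) ≤ ‖f‖ * ‖v‖ := by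
        calc f (-v)⁺ ≤ ‖f‖ * ‖(-v)⁺‖ := le_trans (le_abs_self _) (f.le_opNorm _)
          _ ≤ ‖f‖ * ‖v‖ := by
              gcongr
              calc ‖(-v)⁺‖ ≤ ‖|(-v)|‖ := by
                    apply norm_le_norm_of_abs_le_abs
                    rw [abs_of_nonneg (posPart_nonneg _), abs_abs]
                    rw [posPart_def]
                    exact sup_le (le_abs_self _) (abs_nonneg _)
                _ = ‖v‖ := by rw [abs_neg, norm_abs_eq_norm]
      have := (hg_le (-v)).trans hb
      rw [map_neg] at this; linarith
    exact abs_le.2 ⟨h2, h1⟩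
  refine ⟨g.mkContinuous ‖f‖ hbound, ?_, ?_, ?_⟩
  · intro v hv
    have := hg_le (-v)
    have h0 : (-v)⁺ = 0 := by
      rw [posPart_def, sup_eq_right]
      simpa using hv
    rw [map_neg] at this
    simp only [hN, h0, map_zero] at this
    simpa [LinearMap.mkContinuous_apply] using neg_nonpos.mp this
  · intro v hv
    have := hg_le v
    have h0 : v⁺ = v := posPart_eq_self.2 hv
    simpa [LinearMap.mkContinuous_apply, hN, h0] using this
  · have := hg_eq ⟨u, Submodule.mem_span_singleton_self u⟩
    have happ : p ⟨u, Submodule.mem_span_singleton_self u⟩ = f u⁺ :=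
      LinearPMap.mkSpanSingleton_apply ℝ ℝ hu (f u⁺)
    simpa [LinearMap.mkContinuous_apply, happ] using this

end Aux

/-- The canonical embedding into the double dual is a lattice homomorphism:
`J (x ⊔ y)` is the least upper bound of `J x` and `J y` for the canonical
order on `V**`. -/
theorem inclusionInDoubleDual_latticeHom (x y : V) :
    DoubleDualLE (NormedSpace.inclusionInDoubleDual ℝ V x)
        (NormedSpace.inclusionInDoubleDual ℝ V (x ⊔ y)) ∧
      DoubleDualLE (NormedSpace.inclusionInDoubleDual ℝ V y)
        (NormedSpace.inclusionInDoubleDual ℝ V (x ⊔ y)) ∧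
      ∀ μ : StrongDual ℝ (StrongDual ℝ V),
        DoubleDualLE (NormedSpace.inclusionInDoubleDual ℝ V x) μ →
        DoubleDualLE (NormedSpace.inclusionInDoubleDual ℝ V y) μ →
        DoubleDualLE (NormedSpace.inclusionInDoubleDual ℝ V (x ⊔ y)) μ := by
  refine ⟨?_, ?_, ?_⟩
  · intro f hf
    simpa [NormedSpace.dual_def] using pos_mono hf (le_sup_left : x ≤ x ⊔ y)
  · intro f hf
    simpa [NormedSpace.dual_def] using pos_mono hf (le_sup_right : y ≤ x ⊔ y)
  · intro μ hx hy f hf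
    obtain ⟨g, hg_pos, hg_le, hg_u⟩ := exists_pos_component f hf (x - y)
    have hfg_pos : ∀ v : V, 0 ≤ v → 0 ≤ (f - g) v := by
      intro v hv
      have := hg_le v hv
      simpa [sub_nonneg] using this
    have key : f (x ⊔ y) = g x + (f - g) y := by
      have hsup : x ⊔ y = (x - y)⁺ + y := by
        rw [posPart_def, sup_add, zero_add, sub_add_cancel]
      rw [hsup, map_add, ← hg_u]
      simp [map_sub]
      ring
    have h1 : g x ≤ μ g := by
      have := hx g hg_pos
      simpa [NormedSpace.dual_def] using this
    have h2 : (f - g) y ≤ μ (f - g) := by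
      have := hy (f - g) hfg_pos
      simpa [NormedSpace.dual_def] using this
    have : f (x ⊔ y) ≤ μ g + μ (f - g) := by
      rw [key]; exact add_le_add h1 h2
    simpa [NormedSpace.dual_def, ← map_add] using this
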